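/- Assume η₁* > η₂* > 1. With K₁ = σ₁η₁*/(η₁*-1), K₂ = σ₃η₁*/(η₁*-1), K₃ = σ₂η₂*/(η₂*-1), K₄ = σ₃η₂*/(η₂*-1), K₅ = (Δ_μ/Δ_α)·η₁*/(η₁*-1), K₆ = (Δ_μ/Δ_α)·η₂*/(η₂*-1), one has K₁ < K₅ < K₂ and K₃ < K₆ < K₄. -/

import Mathlib

/-- If η₁* > η₂* > 1 then K₁ < K₅ < K₂ and K₃ < K₆ < K₄. -/
theorem stmt_4 (r a1 a2 a3 m1 m2 m3 e1 e2 s1 s2 s3 A1 A2 E1 E2 Da Dm K1 K2 K3 K4 K5 K6 : ℝ)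
    (hr : 0 < r) (ha1 : 0 < a1) (ha2 : 0 < a2) (ha3 : 0 < a3)
    (hm1 : 0 < m1) (hm2 : 0 < m2) (hm3 : 0 < m3) (he1 : 0 < e1) (he2 : 0 < e2)
    (hs1 : s1 = m1 / a1) (hs2 : s2 = m2 / a2) (hs3 : s3 = m3 / a3)
    (h12 : s1 < s2) (h23 : s2 < s3)
    (hA1 : A1 = a1 * a3 * (s3 - s1) / r) (hA2 : A2 = a2 * a3 * (s3 - s2) / r)
    (hE1 : E1 = e1 / A1) (hE2 : E2 = e2 / A2)
    (hDa : Da = a2 * e1 - a1 * e2) (hDm : Dm = m2 * e1 - m1 * e2)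
    (h21 : E1 > E2) (h2 : E2 > 1)
    (hK1 : K1 = s1 * E1 / (E1 - 1)) (hK2 : K2 = s3 * E1 / (E1 - 1))
    (hK3 : K3 = s2 * E2 / (E2 - 1)) (hK4 : K4 = s3 * E2 / (E2 - 1))
    (hK5 : K5 = (Dm / Da) * E1 / (E1 - 1)) (hK6 : K6 = (Dm / Da) * E2 / (E2 - 1)) :
    (K1 < K5 ∧ K5 < K2) ∧ (K3 < K6 ∧ K6 < K4) := by
  have hm1' : m1 = a1 * s1 := by rw [hs1, mul_div_assoc', mul_div_cancel_left₀ _ ha1.ne']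
  have hm2' : m2 = a2 * s2 := by rw [hs2, mul_div_assoc', mul_div_cancel_left₀ _ ha2.ne']
  have h13 : s1 < s3 := lt_trans h12 h23
  have hA1pos : 0 < A1 := by
    rw [hA1]; exact div_pos (mul_pos (mul_pos ha1 ha3) (sub_pos.mpr h13)) hr
  have hA2pos : 0 < A2 := by
    rw [hA2]; exact div_pos (mul_pos (mul_pos ha2 ha3) (sub_pos.mpr h23)) hr
  -- key inequality from E1 > E2
  have hkey : e2 * A1 < e1 * A2 := by
    rw [hE1, hE2] at h21
    have := (div_lt_div_iff₀ hA2pos hA1pos).mp h21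
    linarith
  have h' : e2 * (a1 * a3 * (s3 - s1)) < e1 * (a2 * a3 * (s3 - s2)) := by
    rw [hA1, hA2] at hkey
    have h3 := mul_lt_mul_of_pos_right hkey hr
    have e1' : e2 * (a1 * a3 * (s3 - s1) / r) * r = e2 * (a1 * a3 * (s3 - s1)) := by
      field_simp
    have e2' : e1 * (a2 * a3 * (s3 - s2) / r) * r = e1 * (a2 * a3 * (s3 - s2)) := by
      field_simp
    rw [e1', e2'] at h3; exact h3
  have hkey2 : e2 * (a1 * (s3 - s1)) < e1 * (a2 * (s3 - s2)) := by
    have h3 : a3 * (e2 * (a1 * (s3 - s1))) < a3 * (e1 * (a2 * (s3 - s2))) := by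
      linarith [h']
    exact lt_of_mul_lt_mul_left h3 ha3.le
  have hgt : Da * s2 < Dm := by
    have heq : Dm - Da * s2 = e2 * (a1 * (s2 - s1)) := by rw [hDm, hDa, hm1', hm2']; ring
    have : (0:ℝ) < e2 * (a1 * (s2 - s1)) := by
      exact mul_pos he2 (mul_pos ha1 (sub_pos.mpr h12))
    linarith
  have hlt : Dm < Da * s3 := by
    have heq : Da * s3 - Dm = e1 * (a2 * (s3 - s2)) - e2 * (a1 * (s3 - s1)) := by
      rw [hDm, hDa, hm1', hm2']; ring
    linarith
  have hDapos : 0 < Da := by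
    by_contra h
    push_neg at h
    nlinarith [mul_nonpos_of_nonpos_of_nonneg h (sub_pos.mpr h23).le]
  have hc2 : s2 < Dm / Da := (lt_div_iff₀ hDapos).mpr (by linarith)
  have hc3 : Dm / Da < s3 := (div_lt_iff₀ hDapos).mpr (by linarith)
  have hc1 : s1 < Dm / Da := lt_trans h12 hc2
  have hd1 : 0 < E1 - 1 := by linarith
  have hd2 : 0 < E2 - 1 := by linarith
  have hE1pos : 0 < E1 := by linarith
  have hE2pos : 0 < E2 := by linarith
  refine ⟨⟨?_, ?_⟩, ?_, ?_⟩
  · rw [hK1, hK5]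
    exact (div_lt_div_iff_of_pos_right hd1).mpr (mul_lt_mul_of_pos_right hc1 hE1pos)
  · rw [hK2, hK5]
    exact (div_lt_div_iff_of_pos_right hd1).mpr (mul_lt_mul_of_pos_right hc3 hE1pos)
  · rw [hK3, hK6]
    exact (div_lt_div_iff_of_pos_right hd2).mpr (mul_lt_mul_of_pos_right hc2 hE2pos)
  · rw [hK4, hK6]
    exact (div_lt_div_iff_of_pos_right hd2).mpr (mul_lt_mul_of_pos_right hc3 hE2pos)
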